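/- Consider the four tetrahedra T̂₁ = conv{0, e₁, e₂, e₃}, T̂₂ = conv{0, e₁, −e₂, e₃}, T̂₃ = conv{0, e₁, −e₂, −e₃}, T̂₄ = conv{0, e₁, e₂, −e₃}, and for a ∈ ℝ define the piecewise vector field φ by φ|_{T̂₁}(x) = (0, a − 3a x₃, −a + 3a x₂), φ|_{T̂₂}(x) = (0, −a + 3a x₃, −a − 3a x₂), φ|_{T̂₃}(x) = (0, −a − 3a x₃, a + 3a x₂), φ|_{T̂₄}(x) = (0, a + 3a x₃, a − 3a x₂). Then on each tetrahedron ε(φ) = 0, φ is continuous at the barycenters of the interior faces (the faces containing the edge conv{0, e₁}), and φ vanishes at the barycenters of all boundary faces. -/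

import Mathlib

/-- A vector field has vanishing symmetric gradient
`ε(v) = (Dv + Dvᵀ)/2 = 0` everywhere. -/
def SymGradZero (v : (Fin 3 → ℝ) → Fin 3 → ℝ) : Prop :=
  ∀ (x : Fin 3 → ℝ) (i j : Fin 3),
    fderiv ℝ (fun y => v y i) x (Pi.single j 1)
      + fderiv ℝ (fun y => v y j) x (Pi.single i 1) = 0

private lemma fderiv_affine (b k : ℝ) (m : Fin 3) (x : Fin 3 → ℝ) :
    fderiv ℝ (fun y : Fin 3 → ℝ => b + k * y m) x
      = k • (ContinuousLinearMap.proj m : (Fin 3 → ℝ) →L[ℝ] ℝ) := by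
  have h : HasFDerivAt (fun y : Fin 3 → ℝ => b + k * y m)
      (k • (ContinuousLinearMap.proj m : (Fin 3 → ℝ) →L[ℝ] ℝ)) x := by
    simpa [-hasFDerivAt_const_add_iff, Pi.add_def] using ((hasFDerivAt_const b x).add
      (((ContinuousLinearMap.proj m : (Fin 3 → ℝ) →L[ℝ] ℝ)).hasFDerivAt.const_mul k))
  exact h.fderiv

private lemma fderiv_affine_app (b k : ℝ) (m j : Fin 3) (x : Fin 3 → ℝ) :
    fderiv ℝ (fun y : Fin 3 → ℝ => b + k * y m) x (Pi.single j 1)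
      = k * (Pi.single j 1 : Fin 3 → ℝ) m := by
  rw [fderiv_affine]; simp

private lemma fderiv_affine_sub_app (b k : ℝ) (m j : Fin 3) (x : Fin 3 → ℝ) :
    fderiv ℝ (fun y : Fin 3 → ℝ => b - k * y m) x (Pi.single j 1)
      = -k * (Pi.single j 1 : Fin 3 → ℝ) m := by
  have : (fun y : Fin 3 → ℝ => b - k * y m) = fun y => b + (-k) * y m := by
    funext y; ring
  rw [this, fderiv_affine]; simp

private lemma fderiv_affine_negadd_app (b k : ℝ) (m j : Fin 3) (x : Fin 3 → ℝ) :
    fderiv ℝ (fun y : Fin 3 → ℝ => b + -(k * y m)) x (Pi.single j 1)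
      = -k * (Pi.single j 1 : Fin 3 → ℝ) m := by
  have : (fun y : Fin 3 → ℝ => b + -(k * y m)) = fun y => b + (-k) * y m := by
    funext y; ring
  rw [this, fderiv_affine]; simp

private lemma symGradZero_of (b c k : ℝ) (v : (Fin 3 → ℝ) → Fin 3 → ℝ)
    (h : ∀ x, v x = ![0, b + k * x 2, c - k * x 1]) : SymGradZero v := by
  intro x i j
  have e0 : (fun y => v y 0) = fun _ : Fin 3 → ℝ => (0 : ℝ) := by
    funext y; rw [h y]; simp
  have e1 : (fun y => v y 1) = fun y : Fin 3 → ℝ => b + k * y 2 := by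
    funext y; rw [h y]; simp
  have e2 : (fun y => v y 2) = fun y : Fin 3 → ℝ => c - k * y 1 := by
    funext y; rw [h y]; simp
  fin_cases i <;> fin_cases j <;>
    simp [e0, e1, e2, fderiv_affine_app, fderiv_affine_sub_app,
      fderiv_affine_negadd_app, fderiv_const, Pi.single_apply, -fderiv_const_add]

/-- The four affine pieces of the piecewise rigid body motion `φ` on the
tetrahedra `T̂₁, …, T̂₄` each have vanishing symmetric gradient, `φ` is
continuous at the barycenters of the four interior faces, and `φ` vanishes at
the barycenters of all boundary faces. -/
theorem piecewise_rigid_motion_counterexample (a : ℝ)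
    (φ₁ φ₂ φ₃ φ₄ : (Fin 3 → ℝ) → Fin 3 → ℝ)
    (h₁ : ∀ x, φ₁ x = ![0, a - 3 * a * x 2, -a + 3 * a * x 1])
    (h₂ : ∀ x, φ₂ x = ![0, -a + 3 * a * x 2, -a - 3 * a * x 1])
    (h₃ : ∀ x, φ₃ x = ![0, -a - 3 * a * x 2, a + 3 * a * x 1])
    (h₄ : ∀ x, φ₄ x = ![0, a + 3 * a * x 2, a - 3 * a * x 1]) :
    (SymGradZero φ₁ ∧ SymGradZero φ₂ ∧ SymGradZero φ₃ ∧ SymGradZero φ₄) ∧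
    -- continuity at barycenters of the four interior faces
    (φ₁ ![1/3, 0, 1/3] = φ₂ ![1/3, 0, 1/3] ∧
     φ₂ ![1/3, -1/3, 0] = φ₃ ![1/3, -1/3, 0] ∧
     φ₃ ![1/3, 0, -1/3] = φ₄ ![1/3, 0, -1/3] ∧
     φ₄ ![1/3, 1/3, 0] = φ₁ ![1/3, 1/3, 0]) ∧
    -- vanishing at barycenters of the boundary faces
    (φ₁ ![1/3, 1/3, 1/3] = 0 ∧ φ₁ ![0, 1/3, 1/3] = 0 ∧
     φ₂ ![1/3, -1/3, 1/3] = 0 ∧ φ₂ ![0, -1/3, 1/3] = 0 ∧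
     φ₃ ![1/3, -1/3, -1/3] = 0 ∧ φ₃ ![0, -1/3, -1/3] = 0 ∧
     φ₄ ![1/3, 1/3, -1/3] = 0 ∧ φ₄ ![0, 1/3, -1/3] = 0) := by
  refine ⟨⟨?_, ?_, ?_, ?_⟩, ⟨?_, ?_, ?_, ?_⟩, ?_, ?_, ?_, ?_, ?_, ?_, ?_, ?_⟩
  · exact symGradZero_of a (-a) (-(3*a)) φ₁ (by intro x; rw [h₁ x]; try (ext i; fin_cases i <;> simp <;> try ring))
  · exact symGradZero_of (-a) (-a) (3*a) φ₂ (by intro x; rw [h₂ x]; try (ext i; fin_cases i <;> simp <;> try ring))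
  · exact symGradZero_of (-a) a (-(3*a)) φ₃ (by intro x; rw [h₃ x]; try (ext i; fin_cases i <;> simp <;> try ring))
  · exact symGradZero_of a a (3*a) φ₄ (by intro x; rw [h₄ x]; try (ext i; fin_cases i <;> simp <;> try ring))
  all_goals
    simp only [h₁, h₂, h₃, h₄]
  all_goals
    funext i; fin_cases i <;> simp <;> try ring
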